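/- Let A be a complete normed (Banach) algebra over ℂ and let b, c ∈ A and α ∈ ℂ satisfy bc − cb = α·c. Then for every λ ∈ ℂ one has exp(λb) · c · exp(−λb) = e^{λα} · c, where exp is the exponential function in A defined by its power series. -/

import Mathlib

open NormedSpace in
/-- If `b·c − c·b = α·c` in a complex Banach algebra, then
`exp(λb)·c·exp(−λb) = e^{λα}·c` for every `λ ∈ ℂ`. -/
theorem exp_conj_of_comm_smul {A : Type*} [NormedRing A] [NormedAlgebra ℂ A]
    [CompleteSpace A] (b c : A) (α : ℂ) (h : b * c - c * b = α • c) (lam : ℂ) :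
    exp (lam • b) * c * exp (-(lam • b)) = Complex.exp (lam * α) • c := by
  set a := lam • b with ha
  set d := a + (lam * α) • (1 : A) with hd
  have hbc : b * c = c * b + α • c := by rw [← h, add_sub_cancel]
  have hstep : a * c = c * d := by
    simp only [ha, hd, smul_mul_assoc, hbc, mul_add, mul_smul_comm, mul_one, smul_add, smul_smul]
  have hpow : ∀ n : ℕ, a ^ n * c = c * d ^ n := by
    intro n
    induction n with
    | zero => simp
    | succ n ih =>
      rw [pow_succ', mul_assoc, ih, ← mul_assoc, hstep, mul_assoc, ← pow_succ']
  have hmain : exp a * c = c * exp d := by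
    simp only [exp_eq_tsum (𝕂 := ℂ)]
    rw [← (expSeries_summable' (𝕂 := ℂ) a).tsum_mul_right c,
      ← (expSeries_summable' (𝕂 := ℂ) d).tsum_mul_left c]
    congr 1
    ext n
    rw [smul_mul_assoc, hpow n, mul_smul_comm]
  have hcomm : Commute a ((lam * α) • (1 : A)) := by
    simpa using (Commute.one_right a).smul_right (lam * α)
  have hexpd : exp d = Complex.exp (lam * α) • exp a := by
    rw [hd, exp_add_of_commute_of_mem_ball (𝕂 := ℂ) hcomm (by rw [expSeries_radius_eq_top]; exact edist_lt_top _ _) (by rw [expSeries_radius_eq_top]; exact edist_lt_top _ _), ← Algebra.algebraMap_eq_smul_one, ← algebraMap_exp_comm,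
      Algebra.algebraMap_eq_smul_one, mul_smul_comm, mul_one, Complex.exp_eq_exp_ℂ]
  have hinv : exp a * exp (-a) = 1 := by
    rw [← exp_add_of_commute_of_mem_ball (𝕂 := ℂ) (Commute.refl a).neg_right (by rw [expSeries_radius_eq_top]; exact edist_lt_top _ _) (by rw [expSeries_radius_eq_top]; exact edist_lt_top _ _), add_neg_cancel, exp_zero]
  calc exp a * c * exp (-a) = c * exp d * exp (-a) := by rw [hmain]
    _ = Complex.exp (lam * α) • (c * (exp a * exp (-a))) := by
        rw [hexpd, mul_smul_comm, smul_mul_assoc, mul_assoc]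
    _ = Complex.exp (lam * α) • c := by rw [hinv, mul_one]
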